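/- The Fibonacci difference map F̂, sending a real sequence x (with x_{−1}=0) to y with y_k = (f_k/f_{k+1})x_k − (f_{k+1}/f_k)x_{k−1}, is a linear bijection from the space of all real sequences ω to itself, with inverse given by y ↦ (∑_{j=0}^{k} (f_{k+1}²/(f_j f_{j+1})) y_j)_k. -/

import Mathlib

open Filter Topology

def fibo : ℕ → ℕ
  | 0 => 1
  | 1 => 1
  | n + 2 => fibo (n + 1) + fibo n

noncomputable def Fhat (x : ℕ → ℝ) : ℕ → ℝ
  | 0 => (fibo 0 : ℝ) / fibo 1 * x 0
  | k + 1 => (fibo (k + 1) : ℝ) / fibo (k + 2) * x (k + 1)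
      - (fibo (k + 2) : ℝ) / fibo (k + 1) * x k

noncomputable def xseq (y : ℕ → ℝ) (k : ℕ) : ℝ :=
  ∑ j ∈ Finset.range (k + 1), ((fibo (k + 1) : ℝ) ^ 2 / ((fibo j : ℝ) * fibo (j + 1))) * y j

lemma fibo_pos : ∀ n, 0 < fibo n
  | 0 => one_pos
  | 1 => one_pos
  | n + 2 => by
      have := fibo_pos (n + 1)
      simp only [fibo]
      omega

lemma fibo_ne (n : ℕ) : (fibo n : ℝ) ≠ 0 := by
  exact_mod_cast (fibo_pos n).ne'

lemma Fhat_zero (x : ℕ → ℝ) : Fhat x 0 = (fibo 0 : ℝ) / fibo 1 * x 0 := rfl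
lemma Fhat_succ (x : ℕ → ℝ) (k : ℕ) : Fhat x (k + 1) =
    (fibo (k + 1) : ℝ) / fibo (k + 2) * x (k + 1)
      - (fibo (k + 2) : ℝ) / fibo (k + 1) * x k := rfl

lemma key (x : ℕ → ℝ) (k : ℕ) :
    ∑ j ∈ Finset.range (k + 1), (1 / ((fibo j : ℝ) * fibo (j + 1))) * Fhat x j
      = x k / (fibo (k + 1) : ℝ) ^ 2 := by
  induction k with
  | zero =>
      simp [Fhat_zero, fibo]
  | succ k ih =>
      rw [Finset.sum_range_succ, ih, Fhat_succ]
      have h1 := fibo_ne (k + 1)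
      have h2 := fibo_ne (k + 2)
      field_simp
      ring

lemma left_inv : Function.LeftInverse xseq Fhat := by
  intro x
  funext k
  have h : xseq (Fhat x) k
      = (fibo (k + 1) : ℝ) ^ 2 * ∑ j ∈ Finset.range (k + 1),
          (1 / ((fibo j : ℝ) * fibo (j + 1))) * Fhat x j := by
    rw [xseq, Finset.mul_sum]
    apply Finset.sum_congr rfl
    intro j _
    ring
  rw [h, key]
  have h1 := fibo_ne (k + 1)
  field_simp

lemma right_inv : Function.RightInverse xseq Fhat := by
  intro y
  funext k
  cases k with
  | zero =>
      simp [Fhat_zero, xseq, fibo]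
  | succ k =>
      rw [Fhat_succ, xseq, xseq, Finset.sum_range_succ]
      have hsum : ∀ m : ℕ, ∑ j ∈ Finset.range (k + 1),
          ((fibo (m + 1) : ℝ) ^ 2 / ((fibo j : ℝ) * fibo (j + 1))) * y j
          = (fibo (m + 1) : ℝ) ^ 2 * ∑ j ∈ Finset.range (k + 1),
            (1 / ((fibo j : ℝ) * fibo (j + 1))) * y j := by
        intro m
        rw [Finset.mul_sum]
        exact Finset.sum_congr rfl fun j _ => by ring
      rw [hsum, hsum]
      have h1 := fibo_ne (k + 1)
      have h2 := fibo_ne (k + 2)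
      field_simp
      ring

theorem Fhat_linear_bijection :
    IsLinearMap ℝ Fhat ∧ Function.Bijective Fhat ∧
      Function.LeftInverse xseq Fhat ∧ Function.RightInverse xseq Fhat := by
  refine ⟨⟨?_, ?_⟩, ⟨left_inv.injective, right_inv.surjective⟩, left_inv, right_inv⟩
  · intro x y
    funext k
    cases k with
    | zero => simp [Fhat_zero]; ring
    | succ k => simp [Fhat_succ]; ring
  · intro c x
    funext k
    cases k with
    | zero => simp [Fhat_zero]; ring
    | succ k => simp [Fhat_succ]; ring
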